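/- Let Λ be a compact metric space and f : Λ → Λ an expansive homeomorphism with the periodic gluing orbit property. If h is a homeomorphism commuting with f that preserves every periodic orbit of f (i.e., h(O_f(x)) = O_f(x) for every periodic point x), then h = f^k for some integer k. -/

import Mathlib

open Function Set Filter Topology Metric

variable {X : Type*} [MetricSpace X] [CompactSpace X]

/-- The `n`-th iterate (`n ∈ ℤ`) of a homeomorphism `f`. -/
def zpowIter (f : X ≃ₜ X) (n : ℤ) : X → X := ⇑(f.toEquiv ^ n : Equiv.Perm X)

/-- `x` is a periodic point of `f`. -/
def IsPer (f : X ≃ₜ X) (x : X) : Prop := ∃ n : ℕ, 0 < n ∧ (⇑f)^[n] x = x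

/-- The full (two-sided) orbit of `x` under `f`. -/
def zOrbit (f : X ≃ₜ X) (x : X) : Set X := {y | ∃ n : ℤ, zpowIter f n x = y}

/-- `f` is expansive: some `ε > 0` separates any two distinct orbits. -/
def Expansive (f : X ≃ₜ X) : Prop :=
  ∃ e : ℝ, 0 < e ∧ ∀ x y : X, x ≠ y → ∃ n : ℤ, e < dist (zpowIter f n x) (zpowIter f n y)

/-- The periodic gluing orbit property: any finite collection of orbit segments can be
`ε`-shadowed by a single periodic orbit, with gap times bounded by `K(ε)`. -/
def PeriodicGluing (f : X ≃ₜ X) : Prop :=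
  ∀ e : ℝ, 0 < e → ∃ K : ℕ, 0 < K ∧
    ∀ (k : ℕ) (x : ℕ → X) (n : ℕ → ℕ), (∀ i, i ≤ k → 1 ≤ n i) →
      ∃ (p : ℕ → ℕ) (z : X),
        (∀ i, i ≤ k → 1 ≤ p i ∧ p i ≤ K) ∧
        (∀ i, i ≤ k → ∀ j, j ≤ n i →
          dist ((⇑f)^[j + ∑ l ∈ Finset.range i, (n l + p l)] z) ((⇑f)^[j] (x i)) < e) ∧
        (⇑f)^[∑ l ∈ Finset.range (k + 1), (n l + p l)] z = z

set_option linter.unusedSectionVars false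
set_option linter.unusedVariables false

namespace GlueAux

variable (f : X ≃ₜ X)

lemma zpow_add_apply (a b : ℤ) (x : X) :
    zpowIter f (a + b) x = zpowIter f a (zpowIter f b x) := by
  unfold zpowIter; rw [zpow_add]; rfl

lemma zpow_zero_apply (x : X) : zpowIter f 0 x = x := rfl

lemma zpow_coe (m : ℕ) (x : X) : zpowIter f (m : ℤ) x = (⇑f)^[m] x := by
  unfold zpowIter; rw [zpow_natCast, Equiv.Perm.coe_pow]; rfl

lemma zpow_neg_coe (m : ℕ) (x : X) : zpowIter f (-(m : ℤ)) x = (⇑f.symm)^[m] x := by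
  have h1 : (⇑f)^[m] (zpowIter f (-(m:ℤ)) x) = x := by
    rw [← zpow_coe f m, ← zpow_add_apply]; simp [zpow_zero_apply]
  have h2 : (⇑f)^[m] ((⇑f.symm)^[m] x) = x := by
    have : Function.LeftInverse (⇑f) (⇑f.symm) := fun y => f.apply_symm_apply y
    exact this.iterate m x
  exact ((f.injective).iterate m) (h1.trans h2.symm)

lemma continuous_zpow (n : ℤ) : Continuous (zpowIter f n) := by
  rcases n with m | m
  · have : zpowIter f (Int.ofNat m) = (⇑f)^[m] := funext fun x => zpow_coe f m x
    rw [this]; exact f.continuous.iterate m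
  · have : zpowIter f (Int.negSucc m) = (⇑f.symm)^[m+1] := by
      funext x
      have h : (Int.negSucc m) = -((m+1 : ℕ) : ℤ) := by simp [Int.negSucc_eq]
      rw [h, zpow_neg_coe]
    rw [this]; exact f.symm.continuous.iterate (m+1)

-- zpow commutes with ℕ-iterates of f
lemma zpow_iterate_comm (a : ℤ) (m : ℕ) (x : X) :
    zpowIter f a ((⇑f)^[m] x) = (⇑f)^[m] (zpowIter f a x) := by
  rw [← zpow_coe f m x, ← zpow_add_apply, ← zpow_coe f m (zpowIter f a x), ← zpow_add_apply,
    add_comm]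

variable (h : X ≃ₜ X)

lemma comm_apply (hcomm : ⇑h ∘ ⇑f = ⇑f ∘ ⇑h) (x : X) : h (f x) = f (h x) := congrFun hcomm x

lemma comm_iterate (hcomm : ⇑h ∘ ⇑f = ⇑f ∘ ⇑h) (m : ℕ) (x : X) : h ((⇑f)^[m] x) = (⇑f)^[m] (h x) := by
  have hs : Function.Semiconj (⇑h) (⇑f) (⇑f) := fun y => comm_apply f h hcomm y
  exact (hs.iterate_right m) x

lemma comm_symm_apply (hcomm : ⇑h ∘ ⇑f = ⇑f ∘ ⇑h) (x : X) : h (f.symm x) = f.symm (h x) := by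
  apply f.injective
  rw [← comm_apply f h hcomm (f.symm x), f.apply_symm_apply, f.apply_symm_apply]

lemma comm_zpow (hcomm : ⇑h ∘ ⇑f = ⇑f ∘ ⇑h) (n : ℤ) (x : X) : h (zpowIter f n x) = zpowIter f n (h x) := by
  rcases n with m | m
  · show h (zpowIter f (m:ℤ) x) = zpowIter f (m:ℤ) (h x)
    rw [zpow_coe, zpow_coe]; exact comm_iterate f h hcomm m x
  · have he : (Int.negSucc m) = -((m+1 : ℕ) : ℤ) := by simp [Int.negSucc_eq]
    rw [he, zpow_neg_coe, zpow_neg_coe]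
    have hs : Function.Semiconj (⇑h) (⇑f.symm) (⇑f.symm) :=
      fun y => comm_symm_apply f h hcomm y
    exact (hs.iterate_right (m+1)) x

-- periodicity lemmas
lemma iterate_mul_per (m q : ℕ) (x : X) (hx : (⇑f)^[m] x = x) : (⇑f)^[q * m] x = x := by
  induction q with
  | zero => simp
  | succ q ih => rw [Nat.succ_mul, Function.iterate_add_apply, hx, ih]

lemma iterate_mod_per (m : ℕ) (hm : 0 < m) (x : X) (hx : (⇑f)^[m] x = x) (a : ℕ) :
    (⇑f)^[a] x = (⇑f)^[a % m] x := by
  conv_lhs => rw [← Nat.mod_add_div a m]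
  rw [Function.iterate_add_apply, mul_comm m (a/m), iterate_mul_per f m (a/m) x hx]

lemma zpow_neg_per (m : ℕ) (x : X) (hx : (⇑f)^[m] x = x) : zpowIter f (-(m:ℤ)) x = x := by
  have : zpowIter f (-(m:ℤ)) (zpowIter f (m:ℤ) x) = x := by
    rw [← zpow_add_apply]; simp [zpow_zero_apply]
  rw [zpow_coe, hx] at this; exact this

lemma zpow_zmul_per (m : ℕ) (x : X) (hx : (⇑f)^[m] x = x) (q : ℤ) :
    zpowIter f (q * m) x = x := by
  induction q using Int.induction_on with
  | zero => simp [zpow_zero_apply]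
  | succ q ih =>
      have : ((q : ℤ) + 1) * m = (m : ℤ) + q * m := by ring
      rw [this, zpow_add_apply, ih, zpow_coe, hx]
  | pred q ih =>
      have : (-(q : ℤ) - 1) * m = (-(m:ℤ)) + (-(q:ℤ)) * m := by ring
      rw [this, zpow_add_apply, ih, zpow_neg_per f m x hx]

lemma zpow_per_reduce (m : ℕ) (hm : 0 < m) (x : X) (hx : (⇑f)^[m] x = x) (n : ℤ) :
    zpowIter f n x = (⇑f)^[(n % (m:ℤ)).toNat] x := by
  have hsplit : n = n % (m:ℤ) + (m:ℤ) * (n / (m:ℤ)) := by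
    rw [Int.emod_add_mul_ediv]
  conv_lhs => rw [hsplit]
  rw [zpow_add_apply]
  have h1 : zpowIter f ((m:ℤ) * (n / (m:ℤ))) x = x := by
    rw [mul_comm]; exact zpow_zmul_per f m x hx _
  rw [h1]
  have hnn : 0 ≤ n % (m:ℤ) := Int.emod_nonneg n (by exact_mod_cast hm.ne')
  have : n % (m:ℤ) = (((n % (m:ℤ)).toNat : ℕ) : ℤ) := (Int.toNat_of_nonneg hnn).symm
  rw [this, zpow_coe]
  simp
  rw [sup_eq_left.mpr hnn]

-- uniform continuity of a continuous self-map on a compact metric space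
lemma unif_cont (g : X → X) (hg : Continuous g) (ε : ℝ) (hε : 0 < ε) :
    ∃ δ > 0, ∀ x y : X, dist x y < δ → dist (g x) (g y) < ε := by
  have hu : UniformContinuous g := CompactSpace.uniformContinuous_of_continuous hg
  exact Metric.uniformContinuous_iff.mp hu ε hε

-- uniform continuity for a finite family of zpow iterates
lemma unif_family (T : Finset ℤ) (ε : ℝ) (hε : 0 < ε) :
    ∃ δ > 0, ∀ j ∈ T, ∀ x y : X, dist x y < δ →
      dist (zpowIter f j x) (zpowIter f j y) < ε := by
  classical
  induction T using Finset.induction_on with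
  | empty => exact ⟨1, one_pos, fun j hj => absurd hj (Finset.notMem_empty j)⟩
  | @insert j T' hnot ih =>
      obtain ⟨δ₁, hδ₁, hδ₁'⟩ := ih
      obtain ⟨δ₂, hδ₂, hδ₂'⟩ := unif_cont (zpowIter f j) (continuous_zpow f j) ε hε
      refine ⟨min δ₁ δ₂, lt_min hδ₁ hδ₂, fun i hi x y hxy => ?_⟩
      rcases Finset.mem_insert.mp hi with rfl | hi'
      · exact hδ₂' x y (lt_of_lt_of_le hxy (min_le_right _ _))
      · exact hδ₁' i hi' x y (lt_of_lt_of_le hxy (min_le_left _ _))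

-- uniform expansivity (Lemma U)
lemma unif_expansive (e : ℝ) (he : 0 < e)
    (hsep : ∀ x y : X, x ≠ y → ∃ n : ℤ, e < dist (zpowIter f n x) (zpowIter f n y))
    (ρ : ℝ) (hρ : 0 < ρ) :
    ∃ L : ℕ, ∀ u v : X,
      (∀ j : ℤ, j.natAbs ≤ L → dist (zpowIter f j u) (zpowIter f j v) ≤ e) →
      dist u v ≤ ρ := by
  by_contra hcon
  push_neg at hcon
  set C : ℕ → Set (X × X) := fun L =>
    {p | (∀ j : ℤ, j.natAbs ≤ L → dist (zpowIter f j p.1) (zpowIter f j p.2) ≤ e) ∧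
      ρ ≤ dist p.1 p.2} with hC
  have hclosed : ∀ L, IsClosed (C L) := by
    intro L
    have heq : C L = (⋂ j : ℤ, ⋂ _ : j.natAbs ≤ L,
        {p : X × X | dist (zpowIter f j p.1) (zpowIter f j p.2) ≤ e}) ∩
        {p : X × X | ρ ≤ dist p.1 p.2} := by
      ext p
      simp only [hC, Set.mem_setOf_eq, Set.mem_inter_iff, Set.mem_iInter]
    rw [heq]
    apply IsClosed.inter
    · refine isClosed_iInter (fun j => ?_)
      refine isClosed_iInter (fun hj => ?_)
      exact isClosed_le (Continuous.dist
        ((continuous_zpow f j).comp continuous_fst)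
        ((continuous_zpow f j).comp continuous_snd)) continuous_const
    · exact isClosed_le continuous_const (continuous_fst.dist continuous_snd)
  have hne : ∀ L, (C L).Nonempty := by
    intro L
    obtain ⟨u, v, h1, h2⟩ := hcon L
    exact ⟨(u, v), h1, le_of_lt h2⟩
  have hmono : ∀ L, C (L+1) ⊆ C L := by
    intro L p hp
    exact ⟨fun j hj => hp.1 j (le_trans hj (Nat.le_succ L)), hp.2⟩
  have hcompact : IsCompact (C 0) := (hclosed 0).isCompact
  have hint : (⋂ L, C L).Nonempty :=
    IsCompact.nonempty_iInter_of_sequence_nonempty_isCompact_isClosed C hmono hne hcompact hclosed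
  obtain ⟨⟨u, v⟩, hp⟩ := hint
  have hmem : ∀ L, (u, v) ∈ C L := fun L => Set.mem_iInter.mp hp L
  have huv : u ≠ v := by
    intro heq
    have := (hmem 0).2
    rw [heq] at this
    simp at this
    exact absurd this (not_le.mpr hρ)
  obtain ⟨n, hn⟩ := hsep u v huv
  have := (hmem n.natAbs).1 n le_rfl
  exact absurd hn (not_lt.mpr this)

-- finite nets from compactness
lemma finite_net (δ : ℝ) (hδ : 0 < δ) :
    ∃ T : Finset X, ∀ v : X, ∃ τ ∈ T, dist v τ < δ := by
  classical
  have htb : TotallyBounded (Set.univ : Set X) := isCompact_univ.totallyBounded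
  obtain ⟨t, htf, hcov⟩ := Metric.totallyBounded_iff.mp htb δ hδ
  refine ⟨htf.toFinset, fun v => ?_⟩
  have hv : v ∈ ⋃ y ∈ t, Metric.ball y δ := hcov (Set.mem_univ v)
  simp only [Set.mem_iUnion] at hv
  obtain ⟨y, hy, hball⟩ := hv
  exact ⟨y, htf.mem_toFinset.mpr hy, Metric.mem_ball.mp hball⟩

-- for a periodic point, h maps it to a forward iterate
lemma h_shift_on_per (h : X ≃ₜ X)
    (hper : ∀ x : X, IsPer f x → ⇑h '' zOrbit f x = zOrbit f x)
    (x : X) (m : ℕ) (hm : 0 < m) (hx : (⇑f)^[m] x = x) :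
    ∃ b : ℕ, b < m ∧ h x = (⇑f)^[b] x := by
  have hIsPer : IsPer f x := ⟨m, hm, hx⟩
  have hx_orb : x ∈ zOrbit f x := ⟨0, rfl⟩
  have hmem : h x ∈ zOrbit f x := by
    rw [← hper x hIsPer]; exact ⟨x, hx_orb, rfl⟩
  obtain ⟨n, hn⟩ := hmem
  refine ⟨(n % (m:ℤ)).toNat, ?_, ?_⟩
  · have h1 : n % (m:ℤ) < (m:ℤ) := Int.emod_lt_of_pos n (by exact_mod_cast hm)
    omega
  · rw [← hn, zpow_per_reduce f m hm x hx n]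

end GlueAux

open GlueAux


/-- Theorem A: an expansive homeomorphism with the periodic gluing orbit property has
`h = f^k` for any commuting homeomorphism `h` preserving every periodic orbit of `f`. -/
theorem expansive_gluing_centralizer_is_power
    (f h : X ≃ₜ X) (hexp : Expansive f) (hglue : PeriodicGluing f)
    (hcomm : ⇑h ∘ ⇑f = ⇑f ∘ ⇑h)
    (hper : ∀ x : X, IsPer f x → ⇑h '' zOrbit f x = zOrbit f x) :
    ∃ k : ℤ, ⇑h = zpowIter f k := by

  classical
  obtain ⟨e, he, hsep⟩ := hexp
  rcases isEmpty_or_nonempty X with hX | hX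
  · exact ⟨0, funext fun v => (IsEmpty.false v).elim⟩
  obtain ⟨v₀⟩ := hX
  -- Step 1: produce a periodic point x₀
  obtain ⟨K₁, hK₁, hglue₁⟩ := hglue 1 one_pos
  obtain ⟨p₁, x₀, hp₁, hsh₁, hper₁⟩ :=
    hglue₁ 0 (fun _ => v₀) (fun _ => 1) (fun i _ => le_refl 1)
  set m₀ : ℕ := ∑ l ∈ Finset.range (0 + 1), ((fun _ => 1) l + p₁ l) with hm₀def
  have hm₀eq : m₀ = 1 + p₁ 0 := by simp [hm₀def]
  have hm₀pos : 0 < m₀ := by omega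
  have hx₀ : (⇑f)^[m₀] x₀ = x₀ := hper₁
  obtain ⟨b₀, hb₀lt, hb₀⟩ := h_shift_on_per f h hper x₀ m₀ hm₀pos hx₀
  -- Step 2: case split on whether the orbit of x₀ is all of X
  by_cases hcov : ∀ v : X, ∃ i : ℕ, (⇑f)^[i] x₀ = v
  · refine ⟨(b₀ : ℤ), funext fun v => ?_⟩
    obtain ⟨i, rfl⟩ := hcov v
    rw [zpow_coe]
    rw [comm_iterate f h hcomm i x₀, hb₀, ← Function.iterate_add_apply,
      ← Function.iterate_add_apply, Nat.add_comm]
  push_neg at hcov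
  obtain ⟨u, hu⟩ := hcov
  -- minimal distance from u to the (finite) orbit of x₀
  have hrne : (Finset.range m₀).Nonempty := ⟨0, Finset.mem_range.mpr hm₀pos⟩
  set dmin : ℝ := (Finset.range m₀).inf' hrne (fun i => dist u ((⇑f)^[i] x₀)) with hdmin_def
  have hdmin_pos : 0 < dmin := by
    rw [hdmin_def, Finset.lt_inf'_iff]
    intro i _
    exact dist_pos.mpr (fun hEq => hu i hEq.symm)
  have hdmin_le : ∀ i, i < m₀ → dmin ≤ dist u ((⇑f)^[i] x₀) := by
    intro i hi
    exact Finset.inf'_le _ (Finset.mem_range.mpr hi)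
  -- working expansivity constant
  set estar : ℝ := min e (dmin / 4) with hestar_def
  have hestar : 0 < estar := lt_min he (by linarith)
  have hestar_le_e : estar ≤ e := min_le_left _ _
  have hestar_le_d : estar ≤ dmin / 4 := min_le_right _ _
  have hsep' : ∀ x y : X, x ≠ y →
      ∃ n : ℤ, estar < dist (zpowIter f n x) (zpowIter f n y) := by
    intro x y hxy
    obtain ⟨n, hn⟩ := hsep x y hxy
    exact ⟨n, lt_of_le_of_lt hestar_le_e hn⟩
  -- uniform continuity of h
  obtain ⟨δh, hδh, hδh'⟩ := unif_cont (⇑h) h.continuous (estar / 4) (by linarith)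
  -- uniform expansivity
  obtain ⟨L, hL⟩ := unif_expansive f estar hestar hsep' (estar / 4) (by linarith)
  -- shadowing scale
  set ε : ℝ := min (min (δh / 2) (estar / 2)) (dmin / 4) with hε_def
  have hε : 0 < ε := lt_min (lt_min (by linarith) (by linarith)) (by linarith)
  have hε_δh : 2 * ε ≤ δh := by
    have := min_le_left (min (δh / 2) (estar / 2)) (dmin / 4)
    have := min_le_left (δh / 2) (estar / 2)
    simp only [hε_def]
    rcases le_total (min (δh / 2) (estar / 2)) (dmin / 4) with hc | hc
    · rw [min_eq_left hc]
      rcases le_total (δh / 2) (estar / 2) with hd | hd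
      · rw [min_eq_left hd]; linarith
      · rw [min_eq_right hd]; linarith
    · rw [min_eq_right hc]
      have : min (δh / 2) (estar / 2) ≤ δh / 2 := min_le_left _ _
      linarith
  have hε_estar : 2 * ε ≤ estar := by
    have h1 : ε ≤ min (δh / 2) (estar / 2) := min_le_left _ _
    have h2 : min (δh / 2) (estar / 2) ≤ estar / 2 := min_le_right _ _
    linarith
  have hε_dmin : ε ≤ dmin / 4 := min_le_right _ _
  -- gluing data at scale ε
  obtain ⟨K, hK, hglueK⟩ := hglue ε hε
  set S : ℕ := L + K + 1 with hS_def
  set n₀ : ℕ := 2 * S + 2 * K + 2 with hn₀_def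
  -- net at scale δS
  obtain ⟨δS, hδS, hδS'⟩ := unif_family f (Finset.Icc (-(S:ℤ)) (S:ℤ)) ε hε
  obtain ⟨T, hT⟩ := finite_net (X := X) δS hδS
  set lst : List X := T.toList with hlst_def
  set r : ℕ := lst.length with hr_def
  -- segments
  set xseg : ℕ → X := fun i =>
    if i = 0 then x₀ else if i % 2 = 1 then u
    else zpowIter f (-(S:ℤ)) (lst.getD (i / 2 - 1) v₀) with hxseg_def
  set nseg : ℕ → ℕ := fun i =>
    if i = 0 then n₀ else if i % 2 = 1 then 1 else 2 * S with hnseg_def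
  set kk : ℕ := 2 * r + 1 with hkk_def
  have hnseg1 : ∀ i, i ≤ kk → 1 ≤ nseg i := by
    intro i _
    simp only [hnseg_def]
    split
    · omega
    · split <;> omega
  obtain ⟨p, Z, hp, hsh, hZper⟩ := hglueK kk xseg nseg hnseg1
  set t : ℕ → ℕ := fun i => ∑ l ∈ Finset.range i, (nseg l + p l) with ht_def
  have ht_succ : ∀ i, t (i + 1) = t i + (nseg i + p i) := by
    intro i
    simp only [ht_def]
    rw [Finset.sum_range_succ]
  set P : ℕ := t (kk + 1) with hP_def
  have hPZ : (⇑f)^[P] Z = Z := hZper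
  have ht0 : t 0 = 0 := by simp [ht_def]
  -- evaluations of nseg
  have hnseg0 : nseg 0 = n₀ := by simp [hnseg_def]
  have hnseg_odd : ∀ a : ℕ, nseg (2 * a + 1) = 1 := by
    intro a
    have h1 : (2 * a + 1) % 2 = 1 := by omega
    have h2 : 2 * a + 1 ≠ 0 := by omega
    simp [hnseg_def, h1, h2]
  have hnseg_even : ∀ a : ℕ, nseg (2 * a + 2) = 2 * S := by
    intro a
    have h1 : (2 * a + 2) % 2 = 0 := by omega
    have h2 : 2 * a + 2 ≠ 0 := by omega
    simp [hnseg_def, h1, h2]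
  have hxseg0 : xseg 0 = x₀ := by simp [hxseg_def]
  have hxseg_odd : ∀ a : ℕ, xseg (2 * a + 1) = u := by
    intro a
    have h1 : (2 * a + 1) % 2 = 1 := by omega
    have h2 : 2 * a + 1 ≠ 0 := by omega
    simp [hxseg_def, h1, h2]
  have hxseg_even : ∀ a : ℕ, xseg (2 * a + 2) = zpowIter f (-(S:ℤ)) (lst.getD a v₀) := by
    intro a
    have h1 : (2 * a + 2) % 2 = 0 := by omega
    have h2 : 2 * a + 2 ≠ 0 := by omega
    have h3 : (2 * a + 2) / 2 - 1 = a := by omega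
    simp [hxseg_def, h1, h2, h3]
  have hPpos : 0 < P := by
    have := ht_succ kk
    have h1 : 1 ≤ p kk := (hp kk le_rfl).1
    omega
  obtain ⟨γ, hγlt, hγ⟩ := h_shift_on_per f h hper Z P hPpos hPZ
  have ht_eq : ∀ i, t i = ∑ l ∈ Finset.range i, (nseg l + p l) := fun i => rfl
  have hsh' : ∀ i, i ≤ kk → ∀ j, j ≤ nseg i →
      dist ((⇑f)^[j + t i] Z) ((⇑f)^[j] (xseg i)) < ε := by
    intro i hi j hj
    have := hsh i hi j hj
    rwa [← ht_eq i] at this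
  have hkk_eq : kk = 2 * r + 1 := rfl
  have hε_lt_δh : ε < δh := by linarith
  -- markers cannot be hit by the shifted x₀-window
  have hno_hit : ∀ a, a ≤ r → ¬(γ ≤ t (2 * a + 1) ∧ t (2 * a + 1) ≤ γ + n₀) := by
    rintro a ha ⟨h1, h2⟩
    set j : ℕ := t (2 * a + 1) - γ with hj_def
    have hjn : j ≤ n₀ := by omega
    have hja : j + γ = t (2 * a + 1) := by omega
    -- shadowing of the x₀ window at time j
    have hsh0 : dist ((⇑f)^[j] Z) ((⇑f)^[j] x₀) < ε := by
      have := hsh' 0 (Nat.zero_le _) j (by rw [hnseg0]; exact hjn)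
      rwa [ht0, Nat.add_zero, hxseg0] at this
    have himg : dist (h ((⇑f)^[j] Z)) (h ((⇑f)^[j] x₀)) < estar / 4 :=
      hδh' _ _ (lt_trans hsh0 hε_lt_δh)
    have hlhs : h ((⇑f)^[j] Z) = (⇑f)^[t (2 * a + 1)] Z := by
      rw [comm_iterate f h hcomm j Z, hγ, ← Function.iterate_add_apply, hja]
    have hrhs : h ((⇑f)^[j] x₀) = (⇑f)^[(j + b₀) % m₀] x₀ := by
      rw [comm_iterate f h hcomm j x₀, hb₀, ← Function.iterate_add_apply,
        iterate_mod_per f m₀ hm₀pos x₀ hx₀ (j + b₀)]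
    rw [hlhs, hrhs] at himg
    -- the marker time is ε-close to u
    have hmk : dist ((⇑f)^[t (2 * a + 1)] Z) u < ε := by
      have := hsh' (2 * a + 1) (by omega) 0 (Nat.zero_le _)
      rwa [Nat.zero_add, Function.iterate_zero_apply, hxseg_odd a] at this
    -- contradiction with the distance from u to the orbit of x₀
    have hub : dmin ≤ dist u ((⇑f)^[(j + b₀) % m₀] x₀) :=
      hdmin_le _ (Nat.mod_lt _ hm₀pos)
    have htri : dist u ((⇑f)^[(j + b₀) % m₀] x₀) ≤
        dist u ((⇑f)^[t (2 * a + 1)] Z) + dist ((⇑f)^[t (2 * a + 1)] Z) ((⇑f)^[(j + b₀) % m₀] x₀) :=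
      dist_triangle _ _ _
    rw [dist_comm] at hmk
    linarith
  -- gap structure of consecutive markers
  have hstep : ∀ a, t (2 * a + 3) = t (2 * a + 1) + 1 + p (2 * a + 1) + 2 * S + p (2 * a + 2) := by
    intro a
    have e1 := ht_succ (2 * a + 1)
    have e2 := ht_succ (2 * a + 2)
    rw [hnseg_odd a] at e1
    rw [hnseg_even a] at e2
    have r1 : 2 * a + 1 + 1 = 2 * a + 2 := rfl
    have r2 : 2 * a + 2 + 1 = 2 * a + 3 := rfl
    rw [r1] at e1
    rw [r2] at e2
    omega
  have ht1 : t 1 = n₀ + p 0 := by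
    have h01 := ht_succ 0
    rw [hnseg0] at h01
    have r0 : (0:ℕ) + 1 = 1 := rfl
    rw [r0] at h01
    omega
  -- dichotomy for γ
  have hdich : γ < p 0 ∨ t (2 * r + 1) < γ := by
    by_cases hsm : γ < p 0
    · exact Or.inl hsm
    push_neg at hsm
    right
    have hind : ∀ a, a ≤ r → t (2 * a + 1) < γ := by
      intro a
      induction a with
      | zero =>
        intro _
        by_contra hle
        push_neg at hle
        have hle' : γ ≤ t 1 := hle
        have hb : t 1 ≤ γ + n₀ := by omega
        exact hno_hit 0 (Nat.zero_le r) ⟨hle', hb⟩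
      | succ a ih =>
        intro ha
        have hprev := ih (by omega)
        by_contra hle
        push_neg at hle
        have hle' : γ ≤ t (2 * a + 3) := hle
        have hgap := hstep a
        have hpb1 := (hp (2 * a + 1) (by omega)).2
        have hpb2 := (hp (2 * a + 2) (by omega)).2
        have hb : t (2 * a + 3) ≤ γ + n₀ := by omega
        exact hno_hit (a + 1) ha ⟨hle, hb⟩
    exact hind r le_rfl
  -- the reduced shift γstar
  have hPeq : P = t (2 * r + 1) + 1 + p (2 * r + 1) := by
    have h1 := ht_succ (2 * r + 1)
    rw [hnseg_odd r] at h1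
    have : kk + 1 = 2 * r + 1 + 1 := rfl
    rw [hP_def, this, h1]
    omega
  set γstar : ℤ := if γ < p 0 then (γ : ℤ) else (γ : ℤ) - P with hγstar_def
  have hp0K := (hp 0 (Nat.zero_le kk)).2
  have hpkkK : p (2 * r + 1) ≤ K := (hp (2 * r + 1) (by omega)).2
  have hγbd : -(K : ℤ) ≤ γstar ∧ γstar ≤ (K : ℤ) := by
    rw [hγstar_def]
    split
    · rename_i hlt
      constructor <;> omega
    · rename_i hge
      push_neg at hge
      rcases hdich with hc | hc
      · omega
      · constructor <;> omega
  have hγstarZ : zpowIter f γstar Z = (⇑f)^[γ] Z := by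
    rw [hγstar_def]
    split
    · exact zpow_coe f γ Z
    · have hPZ' : zpowIter f (-(P : ℤ)) Z = Z := zpow_neg_per f P Z hPZ
      have : (γ : ℤ) - P = (γ : ℤ) + (-(P : ℤ)) := by ring
      rw [this, zpow_add_apply, hPZ', zpow_coe]
  -- extension: h is estar/2-close to f^γstar everywhere
  have hext : ∀ v : X, dist (h v) (zpowIter f γstar v) ≤ estar / 2 := by
    intro v
    obtain ⟨τ, hτT, hτ⟩ := hT v
    obtain ⟨a, halt, hgetl⟩ : ∃ a, a < r ∧ lst.getD a v₀ = τ := by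
      have hmem : τ ∈ lst := Finset.mem_toList.mpr hτT
      obtain ⟨a, ha, hval⟩ := List.mem_iff_getElem.mp hmem
      exact ⟨a, ha, by rw [List.getD_eq_getElem lst v₀ ha]; exact hval⟩
    set w' : X := (⇑f)^[S + t (2 * a + 2)] Z with hw'_def
    have hwin : ∀ jj : ℤ, jj.natAbs ≤ S →
        dist (zpowIter f jj w') (zpowIter f jj v) < 2 * ε := by
      intro jj hjj
      have hjnn : (0 : ℤ) ≤ jj + S := by omega
      set m' : ℕ := (jj + S).toNat with hm'_def
      have hm'S : (m' : ℤ) = jj + S := Int.toNat_of_nonneg hjnn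
      have hm'2S : m' ≤ 2 * S := by omega
      have hZseg := hsh' (2 * a + 2) (by omega) m' (by rw [hnseg_even a]; exact hm'2S)
      rw [hxseg_even a, hgetl] at hZseg
      have e2 : (⇑f)^[m'] (zpowIter f (-(S : ℤ)) τ) = zpowIter f jj τ := by
        rw [← zpow_coe f m', ← zpow_add_apply]
        congr 1
        omega
      rw [e2] at hZseg
      have e1 : zpowIter f jj w' = (⇑f)^[m' + t (2 * a + 2)] Z := by
        rw [hw'_def, ← zpow_coe f (S + t (2 * a + 2)) Z, ← zpow_add_apply,
          ← zpow_coe f (m' + t (2 * a + 2)) Z]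
        congr 1
        push_cast
        omega
      have e3 : dist (zpowIter f jj τ) (zpowIter f jj v) < ε := by
        refine hδS' jj (Finset.mem_Icc.mpr ⟨by omega, by omega⟩) τ v ?_
        rw [dist_comm]
        exact hτ
      calc dist (zpowIter f jj w') (zpowIter f jj v)
          ≤ dist (zpowIter f jj w') (zpowIter f jj τ) +
            dist (zpowIter f jj τ) (zpowIter f jj v) := dist_triangle _ _ _
        _ < ε + ε := by
            rw [e1]
            exact add_lt_add hZseg e3
        _ = 2 * ε := by ring
    have hvw : dist v w' < δh := by
      have h0 := hwin 0 (by simp)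
      rw [zpow_zero_apply, zpow_zero_apply, dist_comm] at h0
      linarith
    have d1 : dist (h v) (h w') < estar / 4 := hδh' v w' hvw
    have d2 : h w' = zpowIter f γstar w' := by
      rw [hw'_def]
      rw [comm_iterate f h hcomm _ Z, hγ, ← hγstarZ, zpow_iterate_comm]
    have d3 : dist (zpowIter f γstar w') (zpowIter f γstar v) ≤ estar / 4 := by
      apply hL
      intro i hi
      have hiabs : (i + γstar).natAbs ≤ S := by omega
      have hcl := hwin (i + γstar) hiabs
      rw [zpow_add_apply f i γstar w', zpow_add_apply f i γstar v] at hcl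
      linarith
    calc dist (h v) (zpowIter f γstar v)
        ≤ dist (h v) (h w') + dist (h w') (zpowIter f γstar v) := dist_triangle _ _ _
      _ = dist (h v) (h w') + dist (zpowIter f γstar w') (zpowIter f γstar v) := by rw [d2]
      _ ≤ estar / 4 + estar / 4 := by linarith
      _ = estar / 2 := by ring
  -- conclusion via expansivity
  refine ⟨γstar, funext fun v => ?_⟩
  by_contra hne
  obtain ⟨n, hn⟩ := hsep' (h v) (zpowIter f γstar v) hne
  have e1 : zpowIter f n (h v) = h (zpowIter f n v) := (comm_zpow f h hcomm n v).symm
  have e2 : zpowIter f n (zpowIter f γstar v) = zpowIter f γstar (zpowIter f n v) := by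
    rw [← zpow_add_apply, ← zpow_add_apply, add_comm]
  rw [e1, e2] at hn
  have := hext (zpowIter f n v)
  linarith
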